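/- Suppose w is a nonnegative locally integrable function on ℝ^n, Q is a cube with (1/|Q|)∫_Q w = 1, and for every measurable S ⊆ Q we have w(S)/w(Q) ≤ e (|S|/|Q|)^{1/η} for some η > 2. Then for E_λ = {x ∈ Q : w(x) > λ} and λ ≥ 1 one has |E_λ|/|Q| ≤ e^{η'} λ^{-η'} where η' = η/(η−1), and consequently w(E_λ)/w(Q) ≤ e^{1 + η'/η} λ^{-η'/η}. -/

import Mathlib

open MeasureTheory Metric Set
open scoped ENNReal

/-- The measure `w dx` associated to a weight `w` on ℝⁿ. -/
noncomputable def weightMeasure (n : ℕ) (w : (Fin n → ℝ) → ℝ≥0∞) : Measure (Fin n → ℝ) :=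
  MeasureTheory.volume.withDensity w

private lemma level_aux1 {η lam T : ℝ} (hη : 2 < η) (hlam : 1 ≤ lam) (hT0 : 0 ≤ T)
    (h : lam * T ≤ Real.exp 1 * T ^ (1/η)) :
    T ≤ Real.exp (η/(η-1)) * lam ^ (-(η/(η-1))) := by
  have hη0 : 0 < η := by linarith
  have hη1 : 0 < η - 1 := by linarith
  have hlam0 : 0 < lam := lt_of_lt_of_le one_pos hlam
  rcases eq_or_lt_of_le hT0 with hT | hT
  · rw [← hT]; positivity
  have hsplit : T = T ^ ((η-1)/η) * T ^ (1/η) := by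
    rw [← Real.rpow_add hT, show (η-1)/η + 1/η = 1 by field_simp; ring, Real.rpow_one]
  have hkey : T ^ ((η-1)/η) ≤ Real.exp 1 / lam := by
    nth_rewrite 1 [hsplit] at h
    have h2 : lam * T ^ ((η-1)/η) * T ^ (1/η) ≤ Real.exp 1 * T ^ (1/η) := by
      rw [mul_assoc]; exact h
    have h3 := le_of_mul_le_mul_right h2 (Real.rpow_pos_of_pos hT _)
    rw [le_div_iff₀ hlam0, mul_comm]; exact h3
  calc T = (T ^ ((η-1)/η)) ^ (η/(η-1)) := by
        rw [← Real.rpow_mul hT0, show (η-1)/η * (η/(η-1)) = 1 by field_simp, Real.rpow_one]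
    _ ≤ (Real.exp 1 / lam) ^ (η/(η-1)) :=
        Real.rpow_le_rpow (Real.rpow_nonneg hT0 _) hkey (by positivity)
    _ = Real.exp (η/(η-1)) * lam ^ (-(η/(η-1))) := by
        rw [Real.div_rpow (Real.exp_pos 1).le hlam0.le, Real.exp_one_rpow,
          div_eq_mul_inv, Real.rpow_neg hlam0.le]

private lemma level_aux2 {η lam : ℝ} (hη : 2 < η) (hlam : 1 ≤ lam) :
    (Real.exp (η/(η-1)) * lam ^ (-(η/(η-1)))) ^ (1/η)
      = Real.exp ((η/(η-1))/η) * lam ^ (-((η/(η-1))/η)) := by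
  have hlam0 : 0 < lam := lt_of_lt_of_le one_pos hlam
  rw [Real.mul_rpow (Real.exp_pos _).le (Real.rpow_nonneg hlam0.le _),
    ← Real.exp_one_rpow (η/(η-1)), ← Real.rpow_mul (Real.exp_pos 1).le,
    ← Real.rpow_mul hlam0.le,
    show η/(η-1) * (1/η) = (η/(η-1))/η by ring,
    show -(η/(η-1)) * (1/η) = -((η/(η-1))/η) by ring,
    Real.exp_one_rpow]

/-- Suppose w is a weight, Q a cube with average of w over Q equal to 1 (w(Q) = |Q|), and
w(S)/w(Q) ≤ e (|S|/|Q|)^{1/η} for all measurable S ⊆ Q, where η > 2.  Then for λ ≥ 1, the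
level set E_λ = {x ∈ Q : w(x) > λ} satisfies |E_λ|/|Q| ≤ e^{η'} λ^{-η'} and
w(E_λ)/w(Q) ≤ e^{1+η'/η} λ^{-η'/η}, with η' = η/(η−1). -/
theorem level_set_estimates (n : ℕ) (w : (Fin n → ℝ) → ℝ≥0∞) (hw : Measurable w)
    (c : Fin n → ℝ) (r : ℝ) (hr : 0 < r) (η : ℝ) (hη : 2 < η)
    (havg : weightMeasure n w (closedBall c r) = volume (closedBall c r))
    (hgrowth : ∀ S ⊆ closedBall c r, MeasurableSet S →
      weightMeasure n w S ≤
        ENNReal.ofReal (Real.exp 1) * (volume S / volume (closedBall c r)) ^ (1 / η) *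
          weightMeasure n w (closedBall c r))
    (lam : ℝ) (hlam : 1 ≤ lam) :
    volume {x | x ∈ closedBall c r ∧ ENNReal.ofReal lam < w x} ≤
        ENNReal.ofReal (Real.exp (η / (η - 1)) * lam ^ (-(η / (η - 1)))) *
          volume (closedBall c r) ∧
      weightMeasure n w {x | x ∈ closedBall c r ∧ ENNReal.ofReal lam < w x} ≤
        ENNReal.ofReal (Real.exp (1 + (η / (η - 1)) / η) * lam ^ (-((η / (η - 1)) / η))) *
          weightMeasure n w (closedBall c r) := by
  have hη0 : 0 < η := by linarith
  have hlam0 : 0 < lam := lt_of_lt_of_le one_pos hlam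
  set Q : Set (Fin n → ℝ) := closedBall c r with hQdef
  set E : Set (Fin n → ℝ) := {x | x ∈ Q ∧ ENNReal.ofReal lam < w x} with hEdef
  have hQm : MeasurableSet Q := measurableSet_closedBall
  have hEm : MeasurableSet E := hQm.inter (hw measurableSet_Ioi)
  have hEQ : E ⊆ Q := fun x hx => hx.1
  -- finiteness and positivity
  have hvQpos : 0 < volume Q := measure_closedBall_pos volume c hr
  have hvQfin : volume Q ≠ ∞ := (isCompact_closedBall c r).measure_lt_top.ne
  have hvEfin : volume E ≠ ∞ := ((measure_mono hEQ).trans_lt (isCompact_closedBall c r).measure_lt_top).ne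
  have hWQfin : weightMeasure n w Q ≠ ∞ := by rw [havg]; exact hvQfin
  have hWEfin : weightMeasure n w E ≠ ∞ :=
    ((measure_mono hEQ).trans_lt (lt_of_le_of_ne le_top hWQfin)).ne
  -- lower bound for w(E)
  have hlow : ENNReal.ofReal lam * volume E ≤ weightMeasure n w E := by
    rw [weightMeasure, withDensity_apply _ hEm]
    calc ENNReal.ofReal lam * volume E = ∫⁻ _ in E, ENNReal.ofReal lam := by
          rw [setLIntegral_const]
      _ ≤ ∫⁻ x in E, w x := setLIntegral_mono' hEm fun x hx => (hx.2).le
  -- upper bound for w(E)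
  have hup := hgrowth E hEQ hEm
  rw [havg] at hup
  -- real versions
  set mQ : ℝ := (volume Q).toReal with hmQ
  set mE : ℝ := (volume E).toReal with hmE
  set WE : ℝ := (weightMeasure n w E).toReal with hWE
  have hmQpos : 0 < mQ := ENNReal.toReal_pos hvQpos.ne' hvQfin
  have hmE0 : 0 ≤ mE := ENNReal.toReal_nonneg
  have hWE0 : 0 ≤ WE := ENNReal.toReal_nonneg
  set T : ℝ := mE / mQ with hTdef
  have hT0 : 0 ≤ T := by positivity
  have hR1 : lam * mE ≤ WE := by
    have := ENNReal.toReal_mono hWEfin hlow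
    rwa [ENNReal.toReal_mul, ENNReal.toReal_ofReal hlam0.le] at this
  have hrpow_fin : (volume E / volume Q) ^ (1/η) ≠ ∞ := by
    apply ENNReal.rpow_ne_top_of_nonneg (by positivity)
    exact (ENNReal.div_lt_top hvEfin hvQpos.ne').ne
  have hR2 : WE ≤ Real.exp 1 * T ^ (1/η) * mQ := by
    have hfin : ENNReal.ofReal (Real.exp 1) * (volume E / volume Q) ^ (1/η) * volume Q ≠ ∞ :=
      ENNReal.mul_ne_top (ENNReal.mul_ne_top ENNReal.ofReal_ne_top hrpow_fin) hvQfin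
    have := ENNReal.toReal_mono hfin hup
    rwa [ENNReal.toReal_mul, ENNReal.toReal_mul, ENNReal.toReal_ofReal (Real.exp_pos 1).le,
      ← ENNReal.toReal_rpow, ENNReal.toReal_div] at this
  -- combined real inequality
  have hcomb : lam * T ≤ Real.exp 1 * T ^ (1/η) := by
    have h1 : lam * T * mQ ≤ Real.exp 1 * T ^ (1/η) * mQ := by
      have : lam * T * mQ = lam * mE := by rw [hTdef]; field_simp
      rw [this]; exact hR1.trans hR2
    exact le_of_mul_le_mul_right h1 hmQpos
  have hTbound : T ≤ Real.exp (η/(η-1)) * lam ^ (-(η/(η-1))) :=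
    level_aux1 hη hlam hT0 hcomb
  -- first conclusion
  have hmEbound : mE ≤ Real.exp (η/(η-1)) * lam ^ (-(η/(η-1))) * mQ := by
    have := mul_le_mul_of_nonneg_right hTbound hmQpos.le
    rwa [hTdef, div_mul_cancel₀ _ hmQpos.ne'] at this
  have goal1 : volume E ≤
      ENNReal.ofReal (Real.exp (η/(η-1)) * lam ^ (-(η/(η-1)))) * volume Q := by
    calc volume E = ENNReal.ofReal mE := (ENNReal.ofReal_toReal hvEfin).symm
      _ ≤ ENNReal.ofReal (Real.exp (η/(η-1)) * lam ^ (-(η/(η-1))) * mQ) :=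
          ENNReal.ofReal_le_ofReal hmEbound
      _ = ENNReal.ofReal (Real.exp (η/(η-1)) * lam ^ (-(η/(η-1)))) * ENNReal.ofReal mQ := by
          rw [ENNReal.ofReal_mul (by positivity)]
      _ = ENNReal.ofReal (Real.exp (η/(η-1)) * lam ^ (-(η/(η-1)))) * volume Q := by
          rw [ENNReal.ofReal_toReal hvQfin]
  -- second conclusion
  have hWEbound : WE ≤ Real.exp (1 + (η/(η-1))/η) * lam ^ (-((η/(η-1))/η)) * mQ := by
    have hTle : T ^ (1/η) ≤ (Real.exp (η/(η-1)) * lam ^ (-(η/(η-1)))) ^ (1/η) :=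
      Real.rpow_le_rpow hT0 hTbound (by positivity)
    calc WE ≤ Real.exp 1 * T ^ (1/η) * mQ := hR2
      _ ≤ Real.exp 1 * (Real.exp (η/(η-1)) * lam ^ (-(η/(η-1)))) ^ (1/η) * mQ := by
          have h := mul_le_mul_of_nonneg_left hTle (Real.exp_pos 1).le
          exact mul_le_mul_of_nonneg_right h hmQpos.le
      _ = Real.exp (1 + (η/(η-1))/η) * lam ^ (-((η/(η-1))/η)) * mQ := by
          rw [level_aux2 hη hlam, Real.exp_add]; ring
  have goal2 : weightMeasure n w E ≤
      ENNReal.ofReal (Real.exp (1 + (η/(η-1))/η) * lam ^ (-((η/(η-1))/η))) *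
        weightMeasure n w Q := by
    calc weightMeasure n w E = ENNReal.ofReal WE := (ENNReal.ofReal_toReal hWEfin).symm
      _ ≤ ENNReal.ofReal (Real.exp (1 + (η/(η-1))/η) * lam ^ (-((η/(η-1))/η)) * mQ) :=
          ENNReal.ofReal_le_ofReal hWEbound
      _ = ENNReal.ofReal (Real.exp (1 + (η/(η-1))/η) * lam ^ (-((η/(η-1))/η))) *
            ENNReal.ofReal mQ := by rw [ENNReal.ofReal_mul (by positivity)]
      _ = _ := by rw [ENNReal.ofReal_toReal hvQfin, havg]
  exact ⟨goal1, goal2⟩
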